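/- Let q ∈ (0,1), T ≥ 2, and let ζ ≥ 0 be a fixed real. Define J_{T+1} = 0 and recursively, for τ = T down to 2, suppose J_τ satisfies J_τ ≤ Σ_{t=τ}^T q(1-q)^{t-τ} ζ + Σ_{t=τ}^T q(1-q)^{t-τ} J_{t+1}. Then J_τ ≤ q(T+1-τ)ζ for all τ ∈ [2, T+1]. -/

import Mathlib

open Finset

/-- Backward-induction value-to-go bound from the proof of Lemma 2: if
`J_{T+1} = 0` and for `τ ∈ [2, T]`,
`J_τ ≤ Σ_{t=τ}^T q(1-q)^{t-τ} ζ + Σ_{t=τ}^T q(1-q)^{t-τ} J_{t+1}`,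
then `J_τ ≤ q (T+1-τ) ζ` for all `τ ∈ [2, T+1]`. -/
theorem stmt_18 (q : ℝ) (hq : q ∈ Set.Ioo (0:ℝ) 1) (T : ℕ) (hT : 2 ≤ T)
    (ζ : ℝ) (hζ : 0 ≤ ζ) (J : ℕ → ℝ) (hJT : J (T + 1) = 0)
    (hrec : ∀ τ, 2 ≤ τ → τ ≤ T →
      J τ ≤ (∑ t ∈ Finset.Icc τ T, q * (1 - q) ^ (t - τ) * ζ)
            + ∑ t ∈ Finset.Icc τ T, q * (1 - q) ^ (t - τ) * J (t + 1)) :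
    ∀ τ, 2 ≤ τ → τ ≤ T + 1 → J τ ≤ q * ((T + 1 - τ : ℕ) : ℝ) * ζ := by
  obtain ⟨hq0, hq1⟩ := hq
  have geom : ∀ n : ℕ, (∑ j ∈ Finset.range n, q * (1 - q) ^ j) = 1 - (1 - q) ^ n := by
    intro n
    induction n with
    | zero => simp
    | succ n ih => rw [Finset.sum_range_succ, ih]; ring
  have key : ∀ m : ℕ,
      (∑ j ∈ Finset.range (m + 1), q * (1 - q) ^ j * (1 + q * ((m : ℝ) - j)))
        = q * (m + 1) := by
    intro m
    induction m with
    | zero => simp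
    | succ m ih =>
      rw [Finset.sum_range_succ]
      have h2 : ∑ j ∈ Finset.range (m + 1),
            q * (1 - q) ^ j * (1 + q * (((m + 1 : ℕ) : ℝ) - j))
          = ∑ j ∈ Finset.range (m + 1),
              (q * (1 - q) ^ j * (1 + q * ((m : ℝ) - j)) + q * (q * (1 - q) ^ j)) := by
        apply Finset.sum_congr rfl
        intro j _
        push_cast
        ring
      rw [h2, Finset.sum_add_distrib, ih, ← Finset.mul_sum, geom]
      push_cast
      ring
  have main : ∀ d τ, 2 ≤ τ → τ ≤ T + 1 → T + 1 - τ ≤ d →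
      J τ ≤ q * ((T + 1 - τ : ℕ) : ℝ) * ζ := by
    intro d
    induction d with
    | zero =>
      intro τ h2 hle h0
      have : τ = T + 1 := by omega
      subst this
      simp [hJT]
    | succ d ih =>
      intro τ h2 hle hd
      by_cases hcase : T + 1 - τ ≤ d
      · exact ih τ h2 hle hcase
      · have hτT : τ ≤ T := by omega
        have step : J τ ≤ (∑ t ∈ Finset.Icc τ T, q * (1 - q) ^ (t - τ) * ζ)
            + ∑ t ∈ Finset.Icc τ T, q * (1 - q) ^ (t - τ) * (q * ((T - t : ℕ) : ℝ) * ζ) := by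
          refine le_trans (hrec τ h2 hτT) ?_
          gcongr with t ht
          simp only [Finset.mem_Icc] at ht
          have hJ : J (t + 1) ≤ q * ((T + 1 - (t + 1) : ℕ) : ℝ) * ζ := by
            apply ih (t + 1) (by omega) (by omega) (by omega)
          have : T + 1 - (t + 1) = T - t := by omega
          rw [this] at hJ
          exact hJ
        refine le_trans step ?_
        set m := T - τ with hm
        have hIcc : ∀ f : ℕ → ℝ, (∑ t ∈ Finset.Icc τ T, f t)
            = ∑ j ∈ Finset.range (m + 1), f (τ + j) := by
          intro f
          rw [← Finset.Ico_add_one_right_eq_Icc, Finset.sum_Ico_eq_sum_range]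
          apply Finset.sum_congr
          · congr 1; omega
          · intro j _; rfl
        rw [hIcc, hIcc]
        have hsum : (∑ j ∈ Finset.range (m + 1), q * (1 - q) ^ (τ + j - τ) * ζ)
            + ∑ j ∈ Finset.range (m + 1),
                q * (1 - q) ^ (τ + j - τ) * (q * ((T - (τ + j) : ℕ) : ℝ) * ζ)
            = (∑ j ∈ Finset.range (m + 1), q * (1 - q) ^ j * (1 + q * ((m : ℝ) - j))) * ζ := by
          rw [Finset.sum_mul, ← Finset.sum_add_distrib]
          apply Finset.sum_congr rfl
          intro j hj
          simp only [Finset.mem_range] at hj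
          have h1 : τ + j - τ = j := by omega
          have h2 : T - (τ + j) = m - j := by omega
          have h3 : ((m - j : ℕ) : ℝ) = (m : ℝ) - j := by
            rw [Nat.cast_sub (by omega)]
          rw [h1, h2, h3]
          ring
        rw [hsum, key]
        have hTm : T + 1 - τ = m + 1 := by omega
        rw [hTm]
        push_cast
        nlinarith [mul_nonneg (le_of_lt hq0) hζ]
  intro τ h2 hle
  exact main (T + 1 - τ) τ h2 hle le_rfl
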